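/- If Σ_x is symmetric positive definite and Σ_x̃ = Σ_x + σ² I with σ² = 2μ, then the fixed-point covariance Σ* = −σ² I + Σ_x̃ (I − (μ/2) Σ_x̃⁻¹)⁻¹ satisfies Σ* = Σ_x + (μ/2) I + O(μ²), i.e., ‖Σ* − Σ_x − (μ/2) I‖ ≤ C μ² for some constant C depending only on Σ_x, for all sufficiently small μ > 0. -/

import Mathlib

open scoped Matrix.Norms.L2Operator

open Matrix

private lemma smul_one_posSemidef {k : ℕ} {c : ℝ} (hc : 0 ≤ c) :
    (c • (1 : Matrix (Fin k) (Fin k) ℝ)).PosSemidef := by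
  rw [Matrix.smul_one_eq_diagonal]
  exact Matrix.posSemidef_diagonal_iff.mpr fun _ => hc

private lemma key_identity {k : ℕ} (Sx : Matrix (Fin k) (Fin k) ℝ) (hS : Sx.PosDef)
    (μ : ℝ) (hμ : 0 < μ) :
    ((-(2 * μ)) • (1 : Matrix (Fin k) (Fin k) ℝ) +
          (Sx + (2 * μ) • 1) * (1 - (μ / 2) • (Sx + (2 * μ) • 1)⁻¹)⁻¹)
        - Sx - (μ / 2) • 1
      = (μ ^ 2 / 4) • (Sx + (3 * μ / 2) • 1)⁻¹ := by
  set A : Matrix (Fin k) (Fin k) ℝ := Sx + (2 * μ) • 1 with hAdef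
  set C : Matrix (Fin k) (Fin k) ℝ := Sx + (3 * μ / 2) • 1 with hCdef
  have hA : A.PosDef := hS.add_posSemidef (smul_one_posSemidef (by positivity))
  have hC : C.PosDef := hS.add_posSemidef (smul_one_posSemidef (by positivity))
  have hAd : IsUnit A.det := hA.det_pos.ne'.isUnit
  have hCd : IsUnit C.det := hC.det_pos.ne'.isUnit
  have hCA : C = A - (μ / 2) • 1 := by rw [hAdef, hCdef]; module
  have h1 : (1 : Matrix (Fin k) (Fin k) ℝ) - (μ / 2) • A⁻¹ = A⁻¹ * C := by
    rw [hCA, mul_sub, Matrix.mul_smul, mul_one, Matrix.nonsing_inv_mul A hAd]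
  have h2 : ((1 : Matrix (Fin k) (Fin k) ℝ) - (μ / 2) • A⁻¹)⁻¹ = C⁻¹ * A := by
    rw [h1, Matrix.mul_inv_rev, Matrix.nonsing_inv_nonsing_inv A hAd]
  have hcomm : A * C = C * A := by
    rw [hCA]; simp [mul_sub, sub_mul, Matrix.mul_smul, Matrix.smul_mul]
  have hcommInv : A * C⁻¹ = C⁻¹ * A := by
    calc A * C⁻¹ = C⁻¹ * (C * A) * C⁻¹ := by
          rw [← mul_assoc, Matrix.nonsing_inv_mul C hCd, one_mul]
      _ = C⁻¹ * (A * C) * C⁻¹ := by rw [hcomm]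
      _ = C⁻¹ * A * (C * C⁻¹) := by rw [mul_assoc, mul_assoc, mul_assoc]
      _ = C⁻¹ * A := by rw [Matrix.mul_nonsing_inv C hCd, mul_one]
  have hAC : A = C + (μ / 2) • 1 := by rw [hCA]; module
  have hAA : A * A = C * C + μ • C + (μ ^ 2 / 4) • 1 := by
    rw [hAC]
    simp only [add_mul, mul_add, Matrix.smul_mul, Matrix.mul_smul, one_mul, mul_one, smul_smul]
    module
  have h4 : C⁻¹ * (A * A) = C + μ • 1 + (μ ^ 2 / 4) • C⁻¹ := by
    rw [hAA, mul_add, mul_add, Matrix.mul_smul, Matrix.mul_smul, mul_one, ← mul_assoc,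
      Matrix.nonsing_inv_mul C hCd, one_mul]
  rw [h2, ← mul_assoc, hcommInv, mul_assoc, h4, hCdef]
  module

/-- Bias of the noise-corrected Langevin algorithm in the Gaussian case with σ² = 2μ:
Σ* = Σ_x + (μ/2)I + O(μ²). -/
theorem noise_corrected_gaussian_bias (k : ℕ)
    (Sx : Matrix (Fin k) (Fin k) ℝ) (hS : Sx.PosDef) :
    ∃ C > 0, ∃ μ₀ > 0, ∀ μ : ℝ, 0 < μ → μ < μ₀ →
      ‖((-(2 * μ)) • (1 : Matrix (Fin k) (Fin k) ℝ) +
          (Sx + (2 * μ) • 1) * (1 - (μ / 2) • (Sx + (2 * μ) • 1)⁻¹)⁻¹)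
        - Sx - (μ / 2) • 1‖ ≤ C * μ ^ 2 := by
  -- bound the norm of (Sx + (3t/2)•1)⁻¹ uniformly on [0,1] by compactness
  have hg : Continuous fun t : ℝ => Sx + (3 * t / 2) • (1 : Matrix (Fin k) (Fin k) ℝ) := by
    continuity
  have hpos : ∀ t ∈ Set.Icc (0 : ℝ) 1,
      (Sx + (3 * t / 2) • (1 : Matrix (Fin k) (Fin k) ℝ)).PosDef := fun t ht =>
    hS.add_posSemidef (smul_one_posSemidef (by nlinarith [ht.1]))
  have hcont : ContinuousOn
      (fun t : ℝ => (Sx + (3 * t / 2) • (1 : Matrix (Fin k) (Fin k) ℝ))⁻¹)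
      (Set.Icc (0 : ℝ) 1) := by
    have hdet : ContinuousOn
        (fun t : ℝ => ((Sx + (3 * t / 2) • (1 : Matrix (Fin k) (Fin k) ℝ)).det)⁻¹)
        (Set.Icc (0 : ℝ) 1) :=
      (hg.matrix_det.continuousOn).inv₀ fun t ht => ((hpos t ht).det_pos).ne'
    have hadj : ContinuousOn
        (fun t : ℝ => (Sx + (3 * t / 2) • (1 : Matrix (Fin k) (Fin k) ℝ)).adjugate)
        (Set.Icc (0 : ℝ) 1) := hg.matrix_adjugate.continuousOn
    have := hdet.smul hadj
    refine this.congr fun t ht => ?_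
    rw [Matrix.inv_def, Ring.inverse_eq_inv]; rfl
  obtain ⟨B, hB⟩ := (isCompact_Icc (a := (0:ℝ)) (b := 1)).exists_bound_of_continuousOn hcont
  refine ⟨max B 1, lt_max_of_lt_right one_pos, 1, one_pos, fun μ hμ hμ1 => ?_⟩
  rw [key_identity Sx hS μ hμ, norm_smul]
  have hBμ : ‖(Sx + (3 * μ / 2) • (1 : Matrix (Fin k) (Fin k) ℝ))⁻¹‖ ≤ max B 1 :=
    le_trans (hB μ ⟨hμ.le, hμ1.le⟩) (le_max_left _ _)
  have hnn : (0:ℝ) ≤ ‖(Sx + (3 * μ / 2) • (1 : Matrix (Fin k) (Fin k) ℝ))⁻¹‖ := norm_nonneg _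
  have h14 : ‖(μ ^ 2 / 4 : ℝ)‖ = μ ^ 2 / 4 := by
    rw [Real.norm_eq_abs, abs_of_nonneg (by positivity)]
  rw [h14]
  calc μ ^ 2 / 4 * ‖(Sx + (3 * μ / 2) • (1 : Matrix (Fin k) (Fin k) ℝ))⁻¹‖
      ≤ μ ^ 2 / 4 * max B 1 := by
        exact mul_le_mul_of_nonneg_left hBμ (by positivity)
    _ ≤ max B 1 * μ ^ 2 := by
        nlinarith [lt_max_of_lt_right (b := B) (one_pos (α := ℝ)), sq_nonneg μ]
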